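/- Let R be a UFD and I a nonzero ideal of R with k = gcd(I) ≠ 0. Then every element of R/I has an I-pre-image, i.e., for every b̂ ∈ R/I there exist r, δ ∈ R with r·δ ≡ b̂ modulo I, gcd(r,k) = 1, and (δ = 0 or δ divides k). -/

import Mathlib

open UniqueFactorizationMonoid

section
variable {R : Type*} [CommRing R] [IsDomain R] [UniqueFactorizationMonoid R]

lemma relprime_pow_aux {p t : R} (hp : Prime p) (h : ¬ p ∣ t) (n : ℕ) :
    IsRelPrime t (p ^ n) := by
  intro d hd1 hd2
  by_contra hu
  have hd0 : d ≠ 0 := by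
    rintro rfl
    exact pow_ne_zero n hp.ne_zero (zero_dvd_iff.mp hd2)
  obtain ⟨q, hq, hqd⟩ := WfDvdMonoid.exists_irreducible_factor hu hd0
  have hqp : Prime q := UniqueFactorizationMonoid.irreducible_iff_prime.mp hq
  have hq_p : q ∣ p := hqp.dvd_of_dvd_pow (hqd.trans hd2)
  have hassoc : Associated q p := hqp.associated_of_dvd hp hq_p
  exact h (hassoc.symm.dvd.trans (hqd.trans hd1))

lemma lemA (I : Ideal R) (k : R) (hk0 : k ≠ 0)
    (hdvd : ∀ a ∈ I, k ∣ a) (hgcd : ∀ d : R, (∀ a ∈ I, d ∣ a) → d ∣ k) :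
    ∃ m : R, k * m ∈ I ∧ ∀ p : R, Prime p → p ∣ k → ¬ p ∣ m := by
  classical
  letI : NormalizationMonoid R := @StrongNormalizationMonoid.toNormalizationMonoid R _ UniqueFactorizationMonoid.normalizationMonoid
  set P : Finset R := (normalizedFactors k).toFinset with hP
  have hPprime : ∀ p ∈ P, Prime p := fun p hp =>
    prime_of_normalized_factor p (Multiset.mem_toFinset.mp hp)
  have hE : ∀ p ∈ P, ∃ e : ℕ, ∃ t : R, ¬ p ∣ t ∧ k = p ^ e * t := by
    intro p hp
    obtain ⟨n, t, ht, hkt⟩ := WfDvdMonoid.max_power_factor hk0 (hPprime p hp).irreducible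
    exact ⟨n, t, ht, hkt⟩
  choose! E T hT hkE using hE
  have hA : ∀ p ∈ P, ∃ a ∈ I, ¬ p ^ (E p + 1) ∣ a := by
    intro p hp
    by_contra hcon
    push_neg at hcon
    have hprime := hPprime p hp
    have hkp : ∀ a ∈ I, k * p ∣ a := by
      intro a ha
      obtain ⟨u, hu⟩ := hcon a ha
      have hTd : T p ∣ a := (Dvd.intro_left _ (hkE p hp).symm).trans (hdvd a ha)
      have hTu : T p ∣ u := by
        refine (relprime_pow_aux hprime (hT p hp) (E p + 1)).dvd_of_dvd_mul_left ?_
        rw [← hu]; exact hTd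
      obtain ⟨v, hv⟩ := hTu
      refine ⟨v, ?_⟩
      rw [hu, hv, hkE p hp]; ring
    obtain ⟨t, ht⟩ := hgcd _ hkp
    have h1 : k * 1 = k * (p * t) := by rw [mul_one, ← mul_assoc, ← ht]
    have : (1 : R) = p * t := mul_left_cancel₀ hk0 h1
    exact hprime.not_isUnit (IsUnit.of_mul_eq_one t this.symm)
  choose! A hAI hAnd using hA
  set a : R := ∑ p ∈ P, (∏ q ∈ P.erase p, q ^ (E q + 1)) * A p with ha
  have haI : a ∈ I := Ideal.sum_mem I fun p hp => I.mul_mem_left _ (hAI p hp)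
  obtain ⟨m, hm⟩ := hdvd a haI
  refine ⟨m, hm ▸ haI, ?_⟩
  intro p hp hpk hpm
  obtain ⟨q, hqmem, hpq⟩ := exists_mem_normalizedFactors_of_dvd hk0 hp.irreducible hpk
  have hqP : q ∈ P := Multiset.mem_toFinset.mpr hqmem
  have hqprime := hPprime q hqP
  -- q ^ (E q + 1) divides a = k * m
  have hqa : q ^ (E q + 1) ∣ a := by
    rw [hm, hkE q hqP, pow_succ]
    have hqm : q ∣ m := hpq.symm.dvd.trans hpm
    obtain ⟨w, hw⟩ := hqm
    exact ⟨T q * w, by rw [hw]; ring⟩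
  -- but q ^ (E q + 1) does not divide a
  have hrest : q ^ (E q + 1) ∣ ∑ r ∈ P.erase q, (∏ s ∈ P.erase r, s ^ (E s + 1)) * A r := by
    refine Finset.dvd_sum fun r hr => ?_
    have hqr : q ∈ P.erase r := by
      rw [Finset.mem_erase] at hr ⊢
      exact ⟨fun h => hr.1 h.symm, hqP⟩
    exact dvd_mul_of_dvd_left (Finset.dvd_prod_of_mem (fun s => s ^ (E s + 1)) hqr) _
  have hsplit : a = (∏ s ∈ P.erase q, s ^ (E s + 1)) * A q
      + ∑ r ∈ P.erase q, (∏ s ∈ P.erase r, s ^ (E s + 1)) * A r := by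
    rw [ha, ← Finset.add_sum_erase P _ hqP]
  have hqterm : q ^ (E q + 1) ∣ (∏ s ∈ P.erase q, s ^ (E s + 1)) * A q := by
    have := hqa
    rw [hsplit] at this
    exact (dvd_add_left hrest).mp this
  have hqprod : ¬ q ∣ ∏ s ∈ P.erase q, s ^ (E s + 1) := by
    intro hq
    obtain ⟨s, hs, hqs⟩ := hqprime.exists_mem_finset_dvd hq
    have hsprime := hPprime s (Finset.mem_of_mem_erase hs)
    have hq_s : q ∣ s := hqprime.dvd_of_dvd_pow hqs
    have : Associated q s := hqprime.associated_of_dvd hsprime hq_s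
    have hnq : normalize q = normalize s := normalize_eq_normalize this.dvd this.symm.dvd
    rw [normalize_normalized_factor q hqmem,
      normalize_normalized_factor s (Multiset.mem_toFinset.mp (Finset.mem_of_mem_erase hs))] at hnq
    exact (Finset.mem_erase.mp hs).1 hnq.symm
  exact hAnd q hqP (hqprime.pow_dvd_of_dvd_mul_left _ hqprod hqterm)

lemma lemB (k b : R) (hb : b ≠ 0) :
    ∃ δ r₀ k₁ : R, b = r₀ * δ ∧ k = k₁ * δ ∧ ∀ p : R, Prime p → p ∣ r₀ → ¬ p ∣ k₁ := by
  classical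
  letI : NormalizationMonoid R := @StrongNormalizationMonoid.toNormalizationMonoid R _ UniqueFactorizationMonoid.normalizationMonoid
  letI : GCDMonoid R := UniqueFactorizationMonoid.toGCDMonoid R
  obtain ⟨r₀, hr⟩ := gcd_dvd_left b k
  obtain ⟨k₁, hk₁⟩ := gcd_dvd_right b k
  refine ⟨gcd b k, r₀, k₁, by rw [mul_comm]; exact hr, by rw [mul_comm]; exact hk₁, ?_⟩
  intro p hp hpr hpk
  have hδ0 : gcd b k ≠ 0 := fun h => hb (by rw [hr, h, zero_mul])
  obtain ⟨s, hs⟩ := hpr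
  obtain ⟨u, hu⟩ := hpk
  have h1 : gcd b k * p ∣ b := ⟨s, by
    calc b = gcd b k * r₀ := hr
    _ = gcd b k * p * s := by rw [hs]; ring⟩
  have h2 : gcd b k * p ∣ k := ⟨u, by
    calc k = gcd b k * k₁ := hk₁
    _ = gcd b k * p * u := by rw [hu]; ring⟩
  have h3 : gcd b k * p ∣ gcd b k * 1 := by rw [mul_one]; exact dvd_gcd h1 h2
  exact hp.not_isUnit (isUnit_of_dvd_one ((mul_dvd_mul_iff_left hδ0).mp h3))

end

theorem stmt9 {R : Type*} [CommRing R] [IsDomain R] [UniqueFactorizationMonoid R]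
    (I : Ideal R) (hI : I ≠ ⊥) (k : R) (hk0 : k ≠ 0)
    (hk : (∀ a ∈ I, k ∣ a) ∧ ∀ d : R, (∀ a ∈ I, d ∣ a) → d ∣ k)
    (bhat : R ⧸ I) :
    ∃ r δ : R, Ideal.Quotient.mk I (r * δ) = bhat ∧
      (∀ d : R, d ∣ r → d ∣ k → IsUnit d) ∧ (δ = 0 ∨ δ ∣ k) := by
  classical
  letI : NormalizationMonoid R := @StrongNormalizationMonoid.toNormalizationMonoid R _ UniqueFactorizationMonoid.normalizationMonoid
  obtain ⟨b, hbhat⟩ := Ideal.Quotient.mk_surjective bhat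
  by_cases hb : b = 0
  · exact ⟨1, 0, by rw [mul_zero, ← hbhat, hb], fun d hd _ => isUnit_of_dvd_one hd, Or.inl rfl⟩
  · obtain ⟨m, hmI, hm⟩ := lemA I k hk0 hk.1 hk.2
    obtain ⟨δ, r₀, k₁, hbr, hkk, hB⟩ := lemB k b hb
    set x : R := ((normalizedFactors k).filter (fun q => ¬ q ∣ r₀)).prod with hx
    refine ⟨r₀ + x * k₁ * m, δ, ?_, ?_, Or.inr ⟨k₁, by rw [hkk, mul_comm]⟩⟩
    · rw [← hbhat]
      refine Ideal.Quotient.eq.mpr ?_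
      have heq : (r₀ + x * k₁ * m) * δ - b = x * (k * m) := by rw [hbr, hkk]; ring
      rw [heq]
      exact I.mul_mem_left x hmI
    · intro d hdr hdk
      by_contra hu
      have hd0 : d ≠ 0 := fun h => hk0 (zero_dvd_iff.mp (h ▸ hdk))
      obtain ⟨p, hpirr, hpd⟩ := WfDvdMonoid.exists_irreducible_factor hu hd0
      have hp : Prime p := UniqueFactorizationMonoid.irreducible_iff_prime.mp hpirr
      have hpk : p ∣ k := hpd.trans hdk
      have hpr : p ∣ r₀ + x * k₁ * m := hpd.trans hdr
      by_cases hpr₀ : p ∣ r₀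
      · have h1 : ¬ p ∣ k₁ := hB p hp hpr₀
        have h2 : ¬ p ∣ m := hm p hp hpk
        have h3 : ¬ p ∣ x := by
          intro hpx
          obtain ⟨q, hq, hpq⟩ := hp.exists_mem_multiset_dvd hpx
          rw [Multiset.mem_filter] at hq
          have hq' : Prime q := prime_of_normalized_factor q hq.1
          have hassoc : Associated p q := hp.associated_of_dvd hq' hpq
          exact hq.2 (hassoc.symm.dvd.trans hpr₀)
        have ht : p ∣ x * k₁ * m := (dvd_add_right hpr₀).mp hpr
        rcases hp.dvd_mul.mp ht with h | h
        · rcases hp.dvd_mul.mp h with h' | h'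
          · exact h3 h'
          · exact h1 h'
        · exact h2 h
      · obtain ⟨q, hq, hpq⟩ := UniqueFactorizationMonoid.exists_mem_normalizedFactors_of_dvd
          hk0 hpirr hpk
        have hq1 : ¬ q ∣ r₀ := fun h => hpr₀ (hpq.dvd.trans h)
        have hqx : q ∣ x := Multiset.dvd_prod (Multiset.mem_filter.mpr ⟨hq, hq1⟩)
        have hpt : p ∣ x * k₁ * m :=
          dvd_mul_of_dvd_left (dvd_mul_of_dvd_left (hpq.dvd.trans hqx) k₁) m
        have : p ∣ r₀ := by
          have := dvd_sub hpr hpt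
          simpa using this
        exact hpr₀ this
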